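/- (Carlson's lemma) Let ω(z) = c₁z + c₂z² + c₃z³ + c₄z⁴ + ⋯ be a Schwarz function on the unit disk D. Then |c₂| ≤ 1 − |c₁|², |c₃| ≤ 1 − |c₁|² − |c₂|²/(1 + |c₁|), and |c₄| ≤ 1 − |c₁|² − |c₂|². -/

import Mathlib

set_option maxHeartbeats 1600000

open Complex Metric Finset
open scoped NNReal

namespace CarlsonAux


/-- `HS a f`: `f` is the sum of the power series with coefficients `a` on the unit ball. -/
def HS (a : ℕ → ℂ) (f : ℂ → ℂ) : Prop :=
  ∀ z ∈ ball (0:ℂ) 1, HasSum (fun n => a n * z ^ n) (f z)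

/-- `Bd f`: `f` is bounded by 1 on the unit ball. -/
def Bd (f : ℂ → ℂ) : Prop := ∀ z ∈ ball (0:ℂ) 1, ‖f z‖ ≤ 1

theorem hs_zero {a : ℕ → ℂ} {f : ℂ → ℂ} (h : HS a f) : f 0 = a 0 := by
  have h0 : (0:ℂ) ∈ ball (0:ℂ) 1 := mem_ball_self one_pos
  have h1 : HasSum (fun n => a n * (0:ℂ) ^ n) (a 0) := by
    convert hasSum_single (f := fun n => a n * (0:ℂ) ^ n) 0 ?_ using 1
    · simp
    · intro b hb
      simp [zero_pow hb]
  exact ((h 0 h0).unique h1)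

theorem coeff0_abs_le {a : ℕ → ℂ} {f : ℂ → ℂ} (h : HS a f) (hb : Bd f) :
    ‖a 0‖ ≤ 1 := by
  have := hb 0 (mem_ball_self one_pos)
  rwa [hs_zero h] at this

theorem summable_norm {a : ℕ → ℂ} {f : ℂ → ℂ} (h : HS a f) {z : ℂ}
    (hz : z ∈ ball (0:ℂ) 1) : Summable (fun n => ‖a n * z ^ n‖) := by
  exact summable_norm_iff.mpr (h z hz).summable

theorem hasFPSOB {a : ℕ → ℂ} {f : ℂ → ℂ} (h : HS a f) :
    HasFPowerSeriesOnBall f (FormalMultilinearSeries.ofScalars ℂ a) 0 1 := by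
  constructor
  · -- 1 ≤ radius
    apply ENNReal.le_of_forall_nnreal_lt
    intro r hr
    apply FormalMultilinearSeries.le_radius_of_summable_norm
    have hrball : ((r:ℝ):ℂ) ∈ ball (0:ℂ) 1 := by
      simp only [mem_ball, dist_zero_right, Complex.norm_real, Real.norm_eq_abs,
        _root_.abs_of_nonneg r.coe_nonneg]
      exact_mod_cast hr
    have := summable_norm h hrball
    apply Summable.congr this
    intro n
    rw [FormalMultilinearSeries.ofScalars_norm]
    simp [norm_mul, norm_pow, Complex.norm_real, _root_.abs_of_nonneg r.coe_nonneg]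
  · exact one_pos
  · intro y hy
    have hyb : y ∈ ball (0:ℂ) 1 := by
      rwa [← ENNReal.coe_one, Metric.emetric_ball_nnreal, NNReal.coe_one] at hy
    have := h y hyb
    simp only [zero_add]
    convert this using 2 with n
    · rfl
    rw [FormalMultilinearSeries.ofScalars_apply_eq]
    simp [mul_comm]

theorem diffOn {a : ℕ → ℂ} {f : ℂ → ℂ} (h : HS a f) :
    DifferentiableOn ℂ f (ball (0:ℂ) 1) := by
  have := (hasFPSOB h).differentiableOn
  rwa [← ENNReal.coe_one, Metric.emetric_ball_nnreal, NNReal.coe_one] at this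

theorem hs_ext {a b : ℕ → ℂ} {f : ℂ → ℂ} (ha : HS a f) (hb : HS b f) : a = b := by
  have h1 := (hasFPSOB ha).hasFPowerSeriesAt
  have h2 := (hasFPSOB hb).hasFPowerSeriesAt
  have := h1.eq_formalMultilinearSeries h2
  exact FormalMultilinearSeries.ofScalars_series_injective ℂ ℂ this


/-- Schwarz lemma: |f z| ≤ |z|. -/
theorem schwarz_bound {a : ℕ → ℂ} {f : ℂ → ℂ} (h : HS a f) (hb : Bd f) (h0 : a 0 = 0)
    {z : ℂ} (hz : z ∈ ball (0:ℂ) 1) : ‖f z‖ ≤ ‖z‖ := by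
  have hf0 : f 0 = 0 := (hs_zero h).trans h0
  apply le_of_forall_pos_le_add
  intro ε hε
  have hmaps : Set.MapsTo f (ball (0:ℂ) 1) (ball (f 0) (1 + ε)) := by
    intro w hw
    rw [hf0, mem_ball, dist_zero_right]
    calc ‖f w‖ ≤ 1 := hb w hw
    _ < 1 + ε := by linarith
  have := Complex.dist_le_div_mul_dist_of_mapsTo_ball (diffOn h) (hmaps.mono_right ball_subset_closedBall) hz
  rw [hf0, dist_zero_right, dist_zero_right, div_one] at this
  calc ‖f z‖ ≤ (1+ε) * ‖z‖ := this
  _ ≤ ‖z‖ + ε := by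
      have h1 : ‖z‖ ≤ 1 := le_of_lt (by simpa [mem_ball, dist_zero_right] using hz)
      have h2 : (0:ℝ) ≤ ‖z‖ := norm_nonneg z
      nlinarith

/-- Dividing out a zero at the origin. -/
theorem shift {a : ℕ → ℂ} {f : ℂ → ℂ} (h : HS a f) (hb : Bd f) (h0 : a 0 = 0) :
    ∃ g : ℂ → ℂ, HS (fun n => a (n+1)) g ∧ Bd g ∧
      ∀ z ∈ ball (0:ℂ) 1, f z = z * g z := by
  classical
  set g : ℂ → ℂ := fun z => if z = 0 then a 1 else f z / z with hg
  have key : ∀ z ∈ ball (0:ℂ) 1, HasSum (fun n => a (n+1) * z ^ n) (g z) ∧ f z = z * g z := by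
    intro z hz
    by_cases hz0 : z = 0
    · subst hz0
      constructor
      · have h1 : HasSum (fun n => a (n+1) * (0:ℂ) ^ n) (a 1) := by
          convert hasSum_single (f := fun n => a (n+1) * (0:ℂ) ^ n) 0 ?_ using 1
          · simp
          · intro b hb'
            simp [zero_pow hb']
        simpa [hg] using h1
      · simp [hg, (hs_zero h).trans h0]
    · have h1 : HasSum (fun n => a (n+1) * z ^ (n+1)) (f z) := by
        rw [hasSum_nat_add_iff (f := fun n => a n * z ^ n) 1]
        simpa [h0] using (h z hz)

      have h3 : HasSum (fun n => a (n+1) * z ^ n) (f z / z) := by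
        have h4 := h1.mul_left z⁻¹
        have h5 : (fun n => z⁻¹ * (a (n+1) * z ^ (n+1))) = (fun n => a (n+1) * z ^ n) := by
          funext n
          field_simp [pow_succ]
          ring
        rw [h5] at h4
        simpa [div_eq_inv_mul] using h4
      have hgz : g z = f z / z := by simp [hg, hz0]
      rw [hgz]
      exact ⟨h3, by field_simp⟩
  refine ⟨g, fun z hz => (key z hz).1, ?_, fun z hz => (key z hz).2⟩
  intro z hz
  by_cases hz0 : z = 0
  · subst hz0
    -- |a 1| ≤ 1 via the derivative Schwarz lemma
    have hd : deriv f 0 = a 1 := by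
      have := (hasFPSOB h).hasFPowerSeriesAt.deriv
      rw [this]
      show (FormalMultilinearSeries.ofScalars ℂ a).coeff 1 = a 1
      show (FormalMultilinearSeries.ofScalars ℂ a) 1 (fun _ => 1) = a 1
      rw [FormalMultilinearSeries.ofScalars_apply_eq]
      simp
    have hf0 : f 0 = 0 := (hs_zero h).trans h0
    have : ‖a 1‖ ≤ 1 := by
      rw [← hd]
      apply le_of_forall_pos_le_add
      intro ε hε
      have hmaps : Set.MapsTo f (ball (0:ℂ) 1) (ball (f 0) (1 + ε)) := by
        intro w hw
        rw [hf0, mem_ball, dist_zero_right]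
        calc ‖f w‖ ≤ 1 := hb w hw
        _ < 1 + ε := by linarith
      have := Complex.norm_deriv_le_div_of_mapsTo_ball (diffOn h) (hmaps.mono_right ball_subset_closedBall) one_pos
      rw [div_one] at this
      linarith
    simpa [hg] using this
  · have hgz : g z = f z / z := by simp [hg, hz0]
    rw [hgz]
    show ‖f z / z‖ ≤ 1
    rw [norm_div]
    apply div_le_one_of_le₀ (schwarz_bound h hb h0 hz) (norm_nonneg z)

/-- Maximum modulus: if |a 0| = 1 then all later coefficients vanish. -/
theorem const_of_abs_coeff0_eq_one {a : ℕ → ℂ} {f : ℂ → ℂ} (h : HS a f) (hb : Bd f)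
    (h1 : ‖a 0‖ = 1) : ∀ n, 1 ≤ n → a n = 0 := by
  have hf0 : f 0 = a 0 := hs_zero h
  have hmax : IsMaxOn (norm ∘ f) (ball (0:ℂ) 1) 0 := by
    intro z hz
    simp only [Function.comp_apply, Set.mem_setOf_eq, hf0]
    calc ‖f z‖ ≤ 1 := hb z hz
    _ = ‖a 0‖ := h1.symm
  have heq := Complex.eqOn_of_isPreconnected_of_isMaxOn_norm
    (convex_ball (0:ℂ) 1).isPreconnected isOpen_ball (diffOn h)
    (mem_ball_self one_pos) hmax
  set b : ℕ → ℂ := fun n => if n = 0 then a 0 else 0 with hbdef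
  have hsb : HS b f := by
    intro z hz
    have h2 : HasSum (fun n => b n * z ^ n) (a 0) := by
      convert hasSum_single (f := fun n => b n * z ^ n) 0 ?_ using 1
      · simp [hbdef]
      · intro n hn
        simp [hbdef, hn]
    have h3 : f z = a 0 := by
      have := heq hz
      simpa [Function.const, hf0] using this
    rwa [h3]
  have := hs_ext h hsb
  intro n hn
  rw [this]
  have : n ≠ 0 := by omega
  simp [hbdef, this]


/-- The Schur/Möbius step. -/
theorem mobius {a : ℕ → ℂ} {f : ℂ → ℂ} (h : HS a f) (hb : Bd f)
    (h0 : ‖a 0‖ < 1) :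
    ∃ (d : ℕ → ℂ) (g : ℂ → ℂ), HS d g ∧ Bd g ∧
      ∀ n, a (n+1) + (starRingEnd ℂ) (a 0) * ∑ i ∈ range (n+1), a i * d (n - i) = d n := by
  classical
  set γ := a 0 with hγ
  set F : ℂ → ℂ := fun z => (f z - γ) / (1 - (starRingEnd ℂ) γ * f z) with hF
  have hden : ∀ z ∈ ball (0:ℂ) 1, 1 - (starRingEnd ℂ) γ * f z ≠ 0 := by
    intro z hz hcon
    have h1 : ‖(starRingEnd ℂ) γ * f z‖ = 1 := by
      have : (starRingEnd ℂ) γ * f z = 1 := by linear_combination -hcon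
      rw [this]; simp
    rw [norm_mul, Complex.norm_conj] at h1
    nlinarith [hb z hz, norm_nonneg γ, norm_nonneg (f z)]
  have hFd : DifferentiableOn ℂ F (ball (0:ℂ) 1) := by
    apply DifferentiableOn.div
    · exact (diffOn h).sub_const γ
    · exact (differentiableOn_const 1).sub ((differentiableOn_const _).mul (diffOn h))
    · exact hden
  have hFb : Bd F := by
    intro z hz
    have hfb := hb z hz
    have hd := hden z hz
    have hnf : Complex.normSq (f z) ≤ 1 := by
      rw [← Complex.sq_norm]; nlinarith [norm_nonneg (f z)]
    have hnγ : Complex.normSq γ ≤ 1 := by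
      rw [← Complex.sq_norm]; nlinarith [norm_nonneg γ]
    have key : Complex.normSq (f z - γ) ≤ Complex.normSq (1 - (starRingEnd ℂ) γ * f z) := by
      rw [Complex.normSq_sub, Complex.normSq_sub]
      have e1 : Complex.normSq ((starRingEnd ℂ) γ * f z)
          = Complex.normSq γ * Complex.normSq (f z) := by
        rw [map_mul, Complex.normSq_conj]
      have e2 : ((1:ℂ) * (starRingEnd ℂ) ((starRingEnd ℂ) γ * f z)).re
          = (f z * (starRingEnd ℂ) γ).re := by
        simp [Complex.mul_re, Complex.conj_re, Complex.conj_im]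
        ring
      rw [e1, e2, Complex.normSq_one]
      nlinarith [Complex.normSq_nonneg (f z), Complex.normSq_nonneg γ]
    show ‖F z‖ ≤ 1
    rw [hF]
    simp only
    rw [norm_div, div_le_one (norm_pos_iff.mpr hd)]
    rw [Complex.norm_def, Complex.norm_def]
    exact Real.sqrt_le_sqrt key
  have hF0 : F 0 = 0 := by
    rw [hF]; simp [hs_zero h, hγ]
  -- power series coefficients of F
  have key : ∀ r : ℝ≥0, 0 < r → (r:ℝ) < 1 →
      HasFPowerSeriesOnBall F (cauchyPowerSeries F 0 r) 0 r := by
    intro r hr0 hr1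
    apply DifferentiableOn.hasFPowerSeriesOnBall _ hr0
    apply hFd.mono
    intro w hw
    rw [mem_closedBall, dist_zero_right] at hw
    rw [mem_ball, dist_zero_right]
    exact lt_of_le_of_lt hw hr1
  have half_lt : (((1:ℝ≥0)/2 : ℝ≥0) : ℝ) < 1 := by norm_num
  have half_pos : (0:ℝ≥0) < (1:ℝ≥0)/2 := by norm_num
  set b : ℕ → ℂ := fun n => (cauchyPowerSeries F 0 (((1:ℝ≥0)/2 : ℝ≥0) : ℝ)).coeff n with hbdef
  have hbs : HS b F := by
    intro z hz
    rw [mem_ball, dist_zero_right] at hz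
    set r : ℝ≥0 := ⟨(‖z‖ + 1)/2, by positivity⟩ with hrdef
    have hrz : ‖z‖ < (r:ℝ) := by
      show ‖z‖ < (‖z‖ + 1)/2
      nlinarith [norm_nonneg z]
    have hr1 : (r:ℝ) < 1 := by
      show (‖z‖ + 1)/2 < (1:ℝ); linarith
    have hr0 : 0 < r := by
      rw [← NNReal.coe_lt_coe]; show (0:ℝ) < (‖z‖ + 1)/2
      nlinarith [norm_nonneg z]
    have k1 := key r hr0 hr1
    have k2 := key ((1:ℝ≥0)/2) half_pos half_lt
    have heq : cauchyPowerSeries F 0 (r:ℝ) = cauchyPowerSeries F 0 (((1:ℝ≥0)/2 : ℝ≥0) : ℝ) :=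
      k1.hasFPowerSeriesAt.eq_formalMultilinearSeries k2.hasFPowerSeriesAt
    have hzball : z ∈ Metric.eball (0:ℂ) r := by
      rw [Metric.emetric_ball_nnreal]
      simpa [mem_ball, dist_zero_right] using hrz
    have hsum := k1.hasSum hzball
    rw [zero_add] at hsum
    have hterm : ∀ n, (cauchyPowerSeries F 0 (r:ℝ)) n (fun _ => z) = b n * z ^ n := by
      intro n
      rw [heq, FormalMultilinearSeries.apply_eq_pow_smul_coeff, hbdef]
      simp only [smul_eq_mul]
      ring
    have hfun : (fun n => (cauchyPowerSeries F 0 (r:ℝ)) n (fun _ => z)) = fun n => b n * z ^ n :=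
      funext hterm
    rw [hfun] at hsum
    exact hsum
  have hb0 : b 0 = 0 := by
    have := hs_zero hbs
    rw [hF0] at this
    exact this.symm
  obtain ⟨g, hgs, hgb, hgf⟩ := shift hbs hFb hb0
  set d : ℕ → ℂ := fun n => b (n+1) with hddef
  refine ⟨d, g, hgs, hgb, ?_⟩
  -- the functional identity
  have funident : ∀ z ∈ ball (0:ℂ) 1,
      f z * (1 + (starRingEnd ℂ) γ * (z * g z)) = γ + z * g z := by
    intro z hz
    have hFz : F z * (1 - (starRingEnd ℂ) γ * f z) = f z - γ :=
      div_mul_cancel₀ _ (hden z hz)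
    rw [← hgf z hz]
    linear_combination -hFz
  -- coefficient sequences
  set e : ℕ → ℂ := fun n => if n = 0 then 1 else (starRingEnd ℂ) γ * d (n-1) with hedef
  set Rc : ℕ → ℂ := fun n => if n = 0 then γ else d (n-1) with hRdef
  set Lc : ℕ → ℂ := fun n => ∑ k ∈ range (n+1), a k * e (n - k) with hLdef
  have hse : HS e (fun z => 1 + (starRingEnd ℂ) γ * (z * g z)) := by
    intro z hz
    have h1 := (hgs z hz).mul_left ((starRingEnd ℂ) γ * z)
    have h2 : (fun n => e (n+1) * z ^ (n+1))
        = fun n => (starRingEnd ℂ) γ * z * (d n * z ^ n) := by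
      funext n
      simp only [hedef, Nat.add_sub_cancel, if_neg (Nat.succ_ne_zero n)]
      ring
    have h3 : HasSum (fun n => e (n+1) * z ^ (n+1)) ((starRingEnd ℂ) γ * z * g z) := by
      rw [h2]; exact h1
    have h4 := (hasSum_nat_add_iff (f := fun n => e n * z ^ n) 1).mp h3
    have h5 : (starRingEnd ℂ) γ * z * g z + ∑ i ∈ range 1, e i * z ^ i
        = 1 + (starRingEnd ℂ) γ * (z * g z) := by
      simp [hedef]
      ring
    rwa [h5] at h4
  have hsR : HS Rc (fun z => γ + z * g z) := by
    intro z hz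
    have h1 := (hgs z hz).mul_left z
    have h2 : (fun n => Rc (n+1) * z ^ (n+1)) = fun n => z * (d n * z ^ n) := by
      funext n
      simp only [hRdef, Nat.add_sub_cancel, if_neg (Nat.succ_ne_zero n)]
      ring
    have h3 : HasSum (fun n => Rc (n+1) * z ^ (n+1)) (z * g z) := by
      rw [h2]; exact h1
    have h4 := (hasSum_nat_add_iff (f := fun n => Rc n * z ^ n) 1).mp h3
    have h5 : z * g z + ∑ i ∈ range 1, Rc i * z ^ i = γ + z * g z := by
      simp [hRdef]
      ring
    rwa [h5] at h4
  have hsL : HS Lc (fun z => γ + z * g z) := by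
    intro z hz
    have sna := summable_norm h hz
    have sne : Summable (fun n => ‖e n * z ^ n‖) := by
      rw [← summable_nat_add_iff 1]
      have h2 : (fun n => ‖e (n+1) * z ^ (n+1)‖)
          = fun n => ‖(starRingEnd ℂ) γ * z‖ * ‖d n * z ^ n‖ := by
        funext n
        simp only [hedef, Nat.add_sub_cancel, if_neg (Nat.succ_ne_zero n)]
        have : (starRingEnd ℂ) γ * d n * z ^ (n+1) = ((starRingEnd ℂ) γ * z) * (d n * z ^ n) := by
          ring
        rw [this, norm_mul]
      rw [h2]
      exact (summable_norm hgs hz).mul_left _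
    have S : Summable (fun n => ∑ k ∈ range (n+1), (a k * z ^ k) * (e (n-k) * z ^ (n-k))) :=
      (summable_norm_sum_mul_range_of_summable_norm sna sne).of_norm
    have hval : ∑' n, ∑ k ∈ range (n+1), (a k * z ^ k) * (e (n-k) * z ^ (n-k))
        = f z * (1 + (starRingEnd ℂ) γ * (z * g z)) := by
      rw [← tsum_mul_tsum_eq_tsum_sum_range_of_summable_norm sna sne,
        (h z hz).tsum_eq, (hse z hz).tsum_eq]
    have hsum := S.hasSum
    rw [hval, funident z hz] at hsum
    have hcong : (fun n => ∑ k ∈ range (n+1), (a k * z ^ k) * (e (n-k) * z ^ (n-k)))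
        = fun n => Lc n * z ^ n := by
      funext n
      rw [hLdef]
      simp only
      rw [Finset.sum_mul]
      apply Finset.sum_congr rfl
      intro k hk
      rw [Finset.mem_range] at hk
      have hkn : k + (n - k) = n := by omega
      calc (a k * z ^ k) * (e (n-k) * z ^ (n-k)) = a k * e (n-k) * z ^ (k + (n-k)) := by
            rw [pow_add]; ring
      _ = a k * e (n-k) * z ^ n := by rw [hkn]
    rw [hcong] at hsum
    exact hsum
  have hLR : Lc = Rc := hs_ext hsL hsR
  intro n
  have h1 : Lc (n+1) = Rc (n+1) := by rw [hLR]
  rw [hLdef, hRdef] at h1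
  simp only [if_neg (Nat.succ_ne_zero n), Nat.add_sub_cancel] at h1
  rw [Finset.sum_range_succ] at h1
  have h2 : e (n + 1 - (n+1)) = 1 := by simp [hedef]
  rw [Nat.sub_self] at h1
  have h3 : ∑ k ∈ range (n+1), a k * e (n + 1 - k)
      = ∑ k ∈ range (n+1), (starRingEnd ℂ) γ * (a k * d (n - k)) := by
    apply Finset.sum_congr rfl
    intro k hk
    rw [Finset.mem_range] at hk
    have hne : n + 1 - k ≠ 0 := by omega
    have hsub : n + 1 - k - 1 = n - k := by omega
    simp only [hedef, if_neg hne, hsub]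
    ring
  rw [h3] at h1
  simp only [hedef, if_pos rfl, mul_one] at h1
  rw [← Finset.mul_sum] at h1
  linear_combination h1


/-- The key algebraic estimate for the fourth coefficient. -/
theorem S_bound (γ d e : ℂ) (hd : ‖d‖ ≤ 1) :
    ‖(starRingEnd ℂ) d * ((1:ℂ) - (Complex.normSq d : ℂ)) * (e * e)
      + 2 * (starRingEnd ℂ) γ * d * ((1:ℂ) - (Complex.normSq d : ℂ)) * e
      - ((starRingEnd ℂ) γ * (starRingEnd ℂ) γ) * (d * d * d)‖
    ≤ (1 - Complex.normSq d) * Complex.normSq e + Complex.normSq γ * Complex.normSq d := by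
  have hnd : Complex.normSq d ≤ 1 := by
    rw [← Complex.sq_norm]; nlinarith [norm_nonneg d]
  set S : ℂ := (starRingEnd ℂ) d * ((1:ℂ) - (Complex.normSq d : ℂ)) * (e * e)
      + 2 * (starRingEnd ℂ) γ * d * ((1:ℂ) - (Complex.normSq d : ℂ)) * e
      - ((starRingEnd ℂ) γ * (starRingEnd ℂ) γ) * (d * d * d) with hS
  set R : ℝ := (1 - Complex.normSq d) * Complex.normSq e + Complex.normSq γ * Complex.normSq d
    with hR
  have hR0 : 0 ≤ R := by
    have := Complex.normSq_nonneg γ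
    have := Complex.normSq_nonneg d
    have := Complex.normSq_nonneg e
    nlinarith
  have key : R ^ 2 - Complex.normSq S
      = (1 - Complex.normSq d) *
        ((1 - Complex.normSq d) * Complex.normSq e - Complex.normSq γ * Complex.normSq d
          - 2 * (γ * ((starRingEnd ℂ) d * (starRingEnd ℂ) d) * e).re) ^ 2 := by
    rw [hS, hR]
    simp only [Complex.normSq_apply, Complex.mul_re, Complex.mul_im, Complex.sub_re,
      Complex.sub_im, Complex.add_re, Complex.add_im, Complex.conj_re, Complex.conj_im,
      Complex.ofReal_re, Complex.ofReal_im, Complex.one_re, Complex.one_im,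
      Complex.re_ofNat, Complex.im_ofNat]
    ring
  have hle : Complex.normSq S ≤ R ^ 2 := by
    nlinarith [sq_nonneg ((1 - Complex.normSq d) * Complex.normSq e
      - Complex.normSq γ * Complex.normSq d
      - 2 * (γ * ((starRingEnd ℂ) d * (starRingEnd ℂ) d) * e).re), key]
  calc ‖S‖ = Real.sqrt (Complex.normSq S) := by rw [Complex.norm_def]
  _ ≤ Real.sqrt (R ^ 2) := Real.sqrt_le_sqrt hle
  _ = R := by rw [Real.sqrt_sq hR0]


theorem abs_sub_le_add (x y : ℂ) : ‖x - y‖ ≤ ‖x‖ + ‖y‖ := by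
  simpa using norm_sub_le x y

end CarlsonAux

open CarlsonAux

/-- Carlson's lemma: coefficient estimates for a Schwarz function
`ω(z) = c₁z + c₂z² + c₃z³ + c₄z⁴ + ⋯`. -/
theorem carlson_schwarz_coeff_bounds
    (ω : ℂ → ℂ) (c : ℕ → ℂ)
    (hω : DifferentiableOn ℂ ω (ball (0 : ℂ) 1))
    (hωc : ∀ z ∈ ball (0 : ℂ) 1, HasSum (fun n => c n * z ^ n) (ω z))
    (hc0 : c 0 = 0)
    (hωmap : ∀ z ∈ ball (0 : ℂ) 1, ω z ∈ ball (0 : ℂ) 1) :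
    ‖c 2‖ ≤ 1 - ‖c 1‖ ^ 2 ∧
    ‖c 3‖ ≤ 1 - ‖c 1‖ ^ 2
      - ‖c 2‖ ^ 2 / (1 + ‖c 1‖) ∧
    ‖c 4‖ ≤ 1 - ‖c 1‖ ^ 2 - ‖c 2‖ ^ 2 := by
  have hsc : HS c ω := hωc
  have hbc : Bd ω := by
    intro z hz
    have := hωmap z hz
    rw [mem_ball, dist_zero_right] at this
    exact le_of_lt this
  obtain ⟨g0, hg0s, hg0b, -⟩ := shift hsc hbc hc0
  set t := ‖c 1‖ with ht
  have ht0 : 0 ≤ t := norm_nonneg _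
  have ht1 : t ≤ 1 := coeff0_abs_le hg0s hg0b
  have hconj1 : (starRingEnd ℂ) (c 1) * c 1 = ((t^2 : ℝ) : ℂ) := by
    rw [mul_comm, Complex.mul_conj, ht, Complex.sq_norm]
  have habs1mt : ‖1 - ((t^2:ℝ):ℂ)‖ = 1 - t^2 := by
    have hnnt : (0:ℝ) ≤ 1 - t^2 := by nlinarith
    rw [show (1 - ((t^2:ℝ):ℂ)) = (((1 - t^2 : ℝ)):ℂ) by push_cast; ring]
    rw [Complex.norm_real, Real.norm_eq_abs, _root_.abs_of_nonneg hnnt]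
  clear_value t
  by_cases htlt : t < 1
  swap
  · -- degenerate: |c 1| = 1
    have hteq : t = 1 := le_antisymm ht1 (not_lt.mp htlt)
    have hteq' : ‖c (0+1)‖ = 1 := by norm_num; rw [← ht]; exact hteq
    have hzero := const_of_abs_coeff0_eq_one hg0s hg0b hteq'
    have hc2 : c 2 = 0 := hzero 1 (by norm_num)
    have hc3 : c 3 = 0 := hzero 2 (by norm_num)
    have hc4 : c 4 = 0 := hzero 3 (by norm_num)
    rw [hc2, hc3, hc4, hteq]
    norm_num
  · obtain ⟨d, g1, hds, hdb, hid⟩ := mobius hg0s hg0b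
      (by norm_num; rw [← ht]; exact htlt)
    have I0 := hid 0
    have I1 := hid 1
    have I2 := hid 2
    simp only [Finset.sum_range_succ, Finset.sum_range_zero, zero_add, Nat.sub_self,
      Nat.sub_zero] at I0 I1 I2
    norm_num at I0 I1 I2
    -- I0 : c 2 + conj (c 1) * (c 1 * d 0) = d 0
    set u := ‖d 0‖ with hu
    have hu0 : 0 ≤ u := norm_nonneg _
    have hu1 : u ≤ 1 := coeff0_abs_le hds hdb
    have hconju : (starRingEnd ℂ) (d 0) * d 0 = ((u^2 : ℝ) : ℂ) := by
      rw [mul_comm, Complex.mul_conj, hu, Complex.sq_norm]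
    clear_value u
    have hc2 : c 2 = (1 - ((t^2:ℝ):ℂ)) * d 0 := by
      linear_combination I0 - d 0 * hconj1
    have habs2 : ‖c 2‖ = (1 - t^2) * u := by
      rw [hc2, norm_mul, habs1mt, hu]
    have hc3 : c 3 = (1 - ((t^2:ℝ):ℂ)) * (d 1 - (starRingEnd ℂ) (c 1) * (d 0 * d 0)) := by
      linear_combination I1 - d 1 * hconj1 - (starRingEnd ℂ) (c 1) * d 0 * hc2
    have hc4 : c 4 = (1 - ((t^2:ℝ):ℂ)) * (d 2 - 2 * (starRingEnd ℂ) (c 1) * (d 0 * d 1)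
        + ((starRingEnd ℂ) (c 1) * (starRingEnd ℂ) (c 1)) * (d 0 * d 0 * d 0)) := by
      linear_combination I2 - d 2 * hconj1 - (starRingEnd ℂ) (c 1) * d 1 * hc2
        - (starRingEnd ℂ) (c 1) * d 0 * hc3
    have goal1 : ‖c 2‖ ≤ 1 - t ^ 2 := by
      rw [habs2]
      nlinarith [mul_le_mul_of_nonneg_left hu1 (show (0:ℝ) ≤ 1-t^2 by nlinarith)]
    have hdiv : ‖c 2‖^2 / (1 + t) = (1-t^2) * (1-t) * u^2 := by
      rw [habs2]
      have h1t : (0:ℝ) < 1 + t := by linarith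
      field_simp
      ring
    by_cases hult : u < 1
    swap
    · -- degenerate: |d 0| = 1
      have hueq : u = 1 := le_antisymm hu1 (not_lt.mp hult)
      have hueq' : ‖d 0‖ = 1 := by rw [← hu]; exact hueq
      have hzero := const_of_abs_coeff0_eq_one hds hdb hueq'
      have hd1 : d 1 = 0 := hzero 1 (by norm_num)
      have hd2 : d 2 = 0 := hzero 2 (by norm_num)
      rw [hd1] at hc3 hc4
      rw [hd2] at hc4
      have habs3 : ‖c 3‖ = (1 - t^2) * t := by
        rw [hc3, norm_mul, habs1mt]
        rw [show (0 : ℂ) - (starRingEnd ℂ) (c 1) * (d 0 * d 0)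
          = -((starRingEnd ℂ) (c 1) * (d 0 * d 0)) by ring]
        rw [norm_neg, norm_mul, norm_mul, Complex.norm_conj, ← ht, ← hu, hueq]
        ring
      have habs4 : ‖c 4‖ = (1 - t^2) * t^2 := by
        rw [hc4, norm_mul]
        rw [show (0 : ℂ) - 2 * (starRingEnd ℂ) (c 1) * (d 0 * 0)
            + (starRingEnd ℂ) (c 1) * (starRingEnd ℂ) (c 1) * (d 0 * d 0 * d 0)
          = ((starRingEnd ℂ) (c 1) * (starRingEnd ℂ) (c 1)) * (d 0 * d 0 * d 0) by ring]
        rw [habs1mt, norm_mul, norm_mul, norm_mul, norm_mul, Complex.norm_conj, ← ht, ← hu, hueq]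
        ring
      refine ⟨goal1, ?_, ?_⟩
      · rw [habs3, hdiv, hueq]; nlinarith
      · rw [habs4, habs2, hueq]; nlinarith
    · obtain ⟨e, g2, hes, heb, hide⟩ := mobius hds hdb (by rw [← hu]; exact hult)
      have J0 := hide 0
      have J1 := hide 1
      simp only [Finset.sum_range_succ, Finset.sum_range_zero, zero_add, Nat.sub_self,
        Nat.sub_zero] at J0 J1
      norm_num at J0 J1
      set v := ‖e 0‖ with hv
      have hv0 : 0 ≤ v := norm_nonneg _
      have hv1 : v ≤ 1 := coeff0_abs_le hes heb
      have hconjv : (starRingEnd ℂ) (e 0) * e 0 = ((v^2 : ℝ) : ℂ) := by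
        rw [mul_comm, Complex.mul_conj, hv, Complex.sq_norm]
      clear_value v
      -- |e 1| ≤ 1 - v²
      have he1 : ‖e 1‖ ≤ 1 - v^2 := by
        by_cases hvlt : v < 1
        · obtain ⟨p, g3, hps, hpb, hidp⟩ := mobius hes heb (by rw [← hv]; exact hvlt)
          have K0 := hidp 0
          simp only [Finset.sum_range_succ, Finset.sum_range_zero, zero_add, Nat.sub_self,
            Nat.sub_zero] at K0
          have hp1 : ‖p 0‖ ≤ 1 := coeff0_abs_le hps hpb
          have he1eq : e 1 = (1 - ((v^2:ℝ):ℂ)) * p 0 := by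
            linear_combination K0 - p 0 * hconjv
          have hnnv : (0:ℝ) ≤ 1 - v^2 := by nlinarith
          rw [he1eq, norm_mul,
            show (1 - ((v^2:ℝ):ℂ)) = (((1 - v^2 : ℝ)):ℂ) by push_cast; ring,
            Complex.norm_real, Real.norm_eq_abs, _root_.abs_of_nonneg hnnv]
          nlinarith [norm_nonneg (p 0)]
        · have hveq : v = 1 := le_antisymm hv1 (not_lt.mp hvlt)
          have := const_of_abs_coeff0_eq_one hes heb (by rw [← hv]; exact hveq)
          rw [this 1 (by norm_num), hveq]
          simp
      have hd1 : d 1 = (1 - ((u^2:ℝ):ℂ)) * e 0 := by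
        linear_combination J0 - e 0 * hconju
      have habsd1 : ‖d 1‖ = (1 - u^2) * v := by
        have hnnu : (0:ℝ) ≤ 1 - u^2 := by nlinarith
        rw [hd1, norm_mul,
          show (1 - ((u^2:ℝ):ℂ)) = (((1 - u^2 : ℝ)):ℂ) by push_cast; ring,
          Complex.norm_real, Real.norm_eq_abs, _root_.abs_of_nonneg hnnu, hv]
      have goal2 : ‖c 3‖ ≤ 1 - t^2 - ‖c 2‖^2 / (1 + t) := by
        have htri : ‖c 3‖ ≤ (1-t^2) * ((1-u^2)*v + t * u^2) := by
          rw [hc3, norm_mul, habs1mt]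
          have h1 : ‖d 1 - (starRingEnd ℂ) (c 1) * (d 0 * d 0)‖
              ≤ (1-u^2)*v + t * u^2 := by
            calc ‖d 1 - (starRingEnd ℂ) (c 1) * (d 0 * d 0)‖
                ≤ ‖d 1‖ + ‖(starRingEnd ℂ) (c 1) * (d 0 * d 0)‖ :=
                  abs_sub_le_add _ _
            _ = (1-u^2)*v + t * u^2 := by
                  rw [habsd1, norm_mul, norm_mul, Complex.norm_conj, ← ht, ← hu]
                  ring
          have h2 : (0:ℝ) ≤ 1 - t^2 := by nlinarith
          nlinarith [h1, norm_nonneg (d 1 - (starRingEnd ℂ) (c 1) * (d 0 * d 0))]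
        rw [hdiv]
        nlinarith [htri, mul_nonneg (mul_nonneg (show (0:ℝ) ≤ 1-t^2 by nlinarith)
          (show (0:ℝ) ≤ 1-u^2 by nlinarith)) (show (0:ℝ) ≤ 1-v by nlinarith)]
      have hd2 : d 2 = (1 - ((u^2:ℝ):ℂ)) * e 1
          - (starRingEnd ℂ) (d 0) * (1 - ((u^2:ℝ):ℂ)) * (e 0 * e 0) := by
        linear_combination J1 - (starRingEnd ℂ) (d 0) * e 0 * hd1 - e 1 * hconju
      have goal3 : ‖c 4‖ ≤ 1 - t^2 - ‖c 2‖^2 := by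
        have hinner : d 2 - 2 * (starRingEnd ℂ) (c 1) * (d 0 * d 1)
            + ((starRingEnd ℂ) (c 1) * (starRingEnd ℂ) (c 1)) * (d 0 * d 0 * d 0)
            = (1 - ((u^2:ℝ):ℂ)) * e 1
              - ((starRingEnd ℂ) (d 0) * ((1:ℂ) - ((Complex.normSq (d 0)):ℂ)) * (e 0 * e 0)
                + 2 * (starRingEnd ℂ) (c 1) * (d 0) * ((1:ℂ) - ((Complex.normSq (d 0)):ℂ)) * (e 0)
                - ((starRingEnd ℂ) (c 1) * (starRingEnd ℂ) (c 1)) * (d 0 * d 0 * d 0)) := by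
          rw [show ((Complex.normSq (d 0) : ℝ) : ℂ) = ((u^2 : ℝ) : ℂ) by
            rw [hu, Complex.sq_norm]]
          linear_combination hd2 - 2 * (starRingEnd ℂ) (c 1) * d 0 * hd1
        have hSb := S_bound (c 1) (d 0) (e 0) (by rw [← hu]; exact hu1)
        rw [show Complex.normSq (d 0) = u^2 by rw [hu, Complex.sq_norm],
          show Complex.normSq (e 0) = v^2 by rw [hv, Complex.sq_norm],
          show Complex.normSq (c 1) = t^2 by rw [ht, Complex.sq_norm]] at hSb
        have habsS := hSb
        have habsinner : ‖d 2 - 2 * (starRingEnd ℂ) (c 1) * (d 0 * d 1)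
            + ((starRingEnd ℂ) (c 1) * (starRingEnd ℂ) (c 1)) * (d 0 * d 0 * d 0)‖
            ≤ (1-u^2) * (1-v^2) + ((1 - u^2) * v^2 + t^2 * u^2) := by
          rw [hinner]
          refine le_trans (abs_sub_le_add _ _) ?_
          apply add_le_add
          · have hnnu : (0:ℝ) ≤ 1 - u^2 := by nlinarith
            rw [norm_mul, show (1 - ((u^2:ℝ):ℂ)) = (((1 - u^2 : ℝ)):ℂ) by push_cast; ring,
              Complex.norm_real, Real.norm_eq_abs, _root_.abs_of_nonneg hnnu]
            have h2 : (0:ℝ) ≤ 1 - u^2 := by nlinarith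
            nlinarith [he1, norm_nonneg (e 1)]
          · rw [show ((Complex.normSq (d 0) : ℝ) : ℂ) = ((u^2 : ℝ) : ℂ) by
              rw [hu, Complex.sq_norm]]
            exact hSb
        rw [hc4, norm_mul, habs1mt, habs2]
        have h2 : (0:ℝ) ≤ 1 - t^2 := by nlinarith
        nlinarith [habsinner, norm_nonneg (d 2 - 2 * (starRingEnd ℂ) (c 1) * (d 0 * d 1)
            + ((starRingEnd ℂ) (c 1) * (starRingEnd ℂ) (c 1)) * (d 0 * d 0 * d 0))]
      exact ⟨goal1, goal2, goal3⟩
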